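/- Let p be a prime, a, k ∈ ℕ, x ∈ ℤ, and set b := p^k + a·x. Then ρ(a,b) = ∞ if p | a and p^{k+1} ∤ a; ρ(a,b) = 1 if x ≤ -p^k/a and (a | p^k - 1 or p^{k+1} | a); and ρ(a,b) = 0 in all other cases. -/

import Mathlib

/-- The radical (squarefree kernel) of a natural number. -/
def rad (n : ℕ) : ℕ := ∏ p ∈ n.primeFactors, p

/-- The set of positive integers `n` with `a'n + b' > 0` and `rad(a'n + b') ∣ g`,
where `g = gcd(a,b)`, `a' = a/g`, `b' = b/g`; its cardinality is `ρ(a,b)`. -/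
def Rset (a : ℕ) (b : ℤ) : Set ℕ :=
  {n : ℕ | 0 < n ∧ 0 < (↑(a / Int.gcd a b) : ℤ) * n + b / (Int.gcd a b : ℤ) ∧
    rad ((↑(a / Int.gcd a b) * n + b / (Int.gcd a b : ℤ)).toNat) ∣ Int.gcd a b}

lemma rad_eq_one {m : ℕ} (h : rad m ∣ 1) : m = 0 ∨ m = 1 := by
  have h2 : m.primeFactors = ∅ := by
    rw [Finset.eq_empty_iff_forall_notMem]
    intro q hq
    have hqp := Nat.prime_of_mem_primeFactors hq
    have : q ∣ 1 := (Finset.dvd_prod_of_mem _ hq).trans h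
    exact hqp.one_lt.ne' (Nat.dvd_one.mp this)
  exact Nat.primeFactors_eq_empty.mp h2

lemma rad_one : rad 1 = 1 := by simp [rad]

lemma rad_prime_pow {p t : ℕ} (hp : p.Prime) (ht : t ≠ 0) : rad (p ^ t) = p := by
  unfold rad
  rw [Nat.primeFactors_prime_pow ht hp, Finset.prod_singleton]

lemma exists_pow_of_rad_dvd {m p k : ℕ} (hp : p.Prime) (hm : m ≠ 0)
    (h : rad m ∣ p ^ k) : ∃ t, m = p ^ t := by
  rcases eq_or_ne m 1 with rfl | h1
  · exact ⟨0, rfl⟩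
  · exact ⟨m.primeFactorsList.length, Nat.eq_prime_pow_of_unique_prime_dvd hm (fun {d} hd hdm => by
      have hmem : d ∈ m.primeFactors := Nat.mem_primeFactors.mpr ⟨hd, hdm, hm⟩
      have : d ∣ p ^ k := (Finset.dvd_prod_of_mem _ hmem).trans h
      exact (Nat.prime_dvd_prime_iff_eq hd hp).mp (hd.dvd_of_dvd_pow this))⟩

lemma gcd_line (a p k : ℕ) (x : ℤ) :
    Int.gcd (a : ℤ) ((p : ℤ) ^ k + a * x) = Nat.gcd a (p ^ k) := by
  have h1 : (↑(Int.gcd (a : ℤ) ((p : ℤ) ^ k + a * x)) : ℤ) ∣ (p : ℤ) ^ k := by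
    have := Int.gcd_dvd_right (a := (a:ℤ)) (b := (p : ℤ) ^ k + a * x)
    have h2 := Int.gcd_dvd_left (a := (a:ℤ)) (b := (p : ℤ) ^ k + a * x)
    have := this.sub (h2.mul_right x)
    simpa using this
  have h3 : Int.gcd (a : ℤ) ((p : ℤ) ^ k + a * x) ∣ Nat.gcd a (p ^ k) := by
    have := Int.dvd_gcd (Int.gcd_dvd_left (a := (a:ℤ)) (b := (p : ℤ) ^ k + a * x)) h1
    rw [show ((p:ℤ))^k = ((p^k : ℕ) : ℤ) by push_cast; ring, Int.gcd_natCast_natCast] at this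
    exact_mod_cast this
  have h4 : Nat.gcd a (p ^ k) ∣ Int.gcd (a : ℤ) ((p : ℤ) ^ k + a * x) := by
    apply Int.natCast_dvd_natCast.mp
    apply Int.dvd_coe_gcd
    · exact Int.natCast_dvd_natCast.mpr (Nat.gcd_dvd_left _ _)
    · have hh : ((Nat.gcd a (p^k) : ℕ) : ℤ) ∣ (p:ℤ)^k := by
        rw [show ((p:ℤ))^k = ((p^k : ℕ) : ℤ) by push_cast; ring]
        exact Int.natCast_dvd_natCast.mpr (Nat.gcd_dvd_right _ _)
      exact (hh.add ((Int.natCast_dvd_natCast.mpr (Nat.gcd_dvd_left _ _)).mul_right x))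
  exact Nat.dvd_antisymm h3 h4

lemma mem_Rset_coprime {p a : ℕ} (k : ℕ) (hp : p.Prime) (hpa : ¬ p ∣ a) (x : ℤ) (n : ℕ) :
    n ∈ Rset a ((p:ℤ)^k + a*x) ↔ 0 < n ∧ (a:ℤ) * n + ((p:ℤ)^k + a*x) = 1 := by
  have hg : Int.gcd (a:ℤ) ((p:ℤ)^k + a*x) = 1 := by
    rw [gcd_line]
    exact Nat.Coprime.pow_right k (((Nat.Prime.coprime_iff_not_dvd hp).mpr hpa).symm)
  simp only [Rset, Set.mem_setOf_eq, hg, Nat.div_one, Nat.cast_one, Int.ediv_one]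
  constructor
  · rintro ⟨hn, hpos, hrad⟩
    refine ⟨hn, ?_⟩
    rcases rad_eq_one hrad with h0 | h1 <;> omega
  · rintro ⟨hn, heq⟩
    rw [heq]
    exact ⟨hn, one_pos, by norm_num [rad_one]⟩

lemma mem_Rset_pow_dvd {p a k : ℕ} (hp : p.Prime) (ha : 0 < a)
    (hdvd : p^(k+1) ∣ a) (x : ℤ) (n : ℕ) :
    n ∈ Rset a ((p:ℤ)^k + a*x) ↔ 0 < n ∧ (n:ℤ) = -x := by
  have hpk : p ^ k ∣ a := (pow_dvd_pow p (Nat.le_succ k)).trans hdvd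
  have hg : Int.gcd (a:ℤ) ((p:ℤ)^k + a*x) = p ^ k := by
    rw [gcd_line]
    exact Nat.gcd_eq_right hpk
  set c := a / p ^ k with hc
  have hac : a = p ^ k * c := (Nat.mul_div_cancel' hpk).symm
  have hpc : p ∣ c := by
    have hpk0 : (p:ℕ)^k ≠ 0 := pow_ne_zero k hp.pos.ne'
    have : p ^ k * p ∣ p ^ k * c := by rw [← hac, ← pow_succ]; exact hdvd
    exact (mul_dvd_mul_iff_left hpk0).mp this
  have hc0 : 0 < c := by
    rcases Nat.eq_zero_or_pos c with h | h
    · rw [h, mul_zero] at hac; omega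
    · exact h
  have hpkZ : ((p:ℤ))^k ≠ 0 := pow_ne_zero k (by exact_mod_cast hp.pos.ne')
  have hb : ((p:ℤ)^k + a*x) / ((p:ℤ)^k) = 1 + c * x := by
    rw [show (p:ℤ)^k + a*x = (p:ℤ)^k * (1 + c * x) by
      have : (a:ℤ) = (p:ℤ)^k * c := by exact_mod_cast congrArg (Nat.cast : ℕ → ℤ) hac
      rw [this]; ring]
    exact Int.mul_ediv_cancel_left _ hpkZ
  have hcast : ((p:ℤ))^k = ((p^k : ℕ) : ℤ) := by push_cast; ring
  simp only [Rset, Set.mem_setOf_eq, hg]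
  rw [← hcast, hb, ← hc]
  constructor
  · rintro ⟨hn, hpos, hrad⟩
    refine ⟨hn, ?_⟩
    set V : ℤ := (c:ℤ) * n + (1 + c * x) with hV
    have hVnat : ((V.toNat : ℤ)) = V := Int.toNat_of_nonneg hpos.le
    obtain ⟨t, ht⟩ := exists_pow_of_rad_dvd hp (by omega) hrad
    have hVt : V = (p:ℤ)^t := by
      rw [← hVnat, ht]; push_cast; ring
    have key : (c:ℤ) * (n + x) = (p:ℤ)^t - 1 := by
      rw [← hVt, hV]; ring
    have hpcZ : (p:ℤ) ∣ (c:ℤ) := Int.natCast_dvd_natCast.mpr hpc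
    rcases Nat.eq_zero_or_pos t with rfl | ht1
    · have : (c:ℤ) * (n + x) = 0 := by rw [key]; ring
      have hcne : (c:ℤ) ≠ 0 := by exact_mod_cast hc0.ne'
      have := (mul_eq_zero.mp this).resolve_left hcne
      linarith
    · exfalso
      have h1 : (p:ℤ) ∣ (p:ℤ)^t - 1 := key ▸ (hpcZ.mul_right _)
      have h2 : (p:ℤ) ∣ (p:ℤ)^t := dvd_pow_self _ ht1.ne'
      have h3 : (p:ℤ) ∣ 1 := by
        have := h2.sub h1
        simpa using this
      have := Int.le_of_dvd one_pos h3
      have h2le : (2:ℤ) ≤ p := by exact_mod_cast hp.two_le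
      linarith
  · rintro ⟨hn, heq⟩
    refine ⟨hn, ?_, ?_⟩
    · rw [heq]; ring_nf; norm_num
    · rw [heq]
      have h5 : (c:ℤ) * (-x) + (1 + c * x) = 1 := by ring
      rw [h5]
      simp [rad_one]

lemma Rset_infinite {p a k : ℕ} (hp : p.Prime) (ha : 0 < a) (hk : 0 < k)
    (hpa : p ∣ a) (hnd : ¬ p ^ (k + 1) ∣ a) (x : ℤ) :
    (Rset a ((p:ℤ)^k + a*x)).Infinite := by
  set v := a.factorization p with hvdef
  have hv1 : 1 ≤ v := Nat.Prime.factorization_pos_of_dvd hp ha.ne' hpa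
  have hpv : p ^ v ∣ a := Nat.ordProj_dvd a p
  have hvk : v ≤ k := by
    by_contra h
    exact hnd ((pow_dvd_pow p (by omega)).trans hpv)
  set c := a / p ^ v with hc
  have hac : a = p ^ v * c := (Nat.ordProj_mul_ordCompl_eq_self a p).symm
  have hpc : ¬ p ∣ c := Nat.not_dvd_ordCompl hp ha.ne'
  have hc0 : 0 < c := by
    rcases Nat.eq_zero_or_pos c with h | h
    · rw [h, mul_zero] at hac; omega
    · exact h
  have hcop : Nat.Coprime p c := (Nat.Prime.coprime_iff_not_dvd hp).mpr hpc
  have hg : Int.gcd (a:ℤ) ((p:ℤ)^k + a*x) = p ^ v := by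
    rw [gcd_line]
    conv_lhs => rw [hac, show p^k = p^v * p^(k-v) by rw [← pow_add]; congr 1; omega]
    rw [Nat.gcd_mul_left, Nat.Coprime.gcd_eq_one (hcop.symm.pow_right _), mul_one]
  have hpvZ : ((p:ℤ))^v ≠ 0 := pow_ne_zero v (by exact_mod_cast hp.pos.ne')
  set N : ℤ := (p:ℤ)^(k-v) + c * x with hN
  have hb : ((p:ℤ)^k + a*x) / (((p^v : ℕ)) : ℤ) = N := by
    push_cast
    rw [show (p:ℤ)^k + a*x = (p:ℤ)^v * N by
      have h1 : (a:ℤ) = (p:ℤ)^v * c := by exact_mod_cast congrArg (Nat.cast : ℕ → ℤ) hac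
      have h2 : (p:ℤ)^k = (p:ℤ)^v * (p:ℤ)^(k-v) := by rw [← pow_add]; congr 1; omega
      rw [h1, h2, hN]; ring]
    exact Int.mul_ediv_cancel_left _ hpvZ
  set φ := c.totient with hφdef
  have hφ : 0 < φ := Nat.totient_pos.mpr hc0
  have heuler : (c:ℤ) ∣ (p:ℤ)^φ - 1 := by
    have h := Nat.ModEq.pow_totient hcop
    have h2 : ((p^φ : ℕ) : ℤ) ≡ ((1:ℕ):ℤ) [ZMOD ((c:ℕ):ℤ)] := Int.natCast_modEq_iff.mpr h
    have h3 := Int.ModEq.dvd h2.symm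
    push_cast at h3
    exact h3
  set t : ℕ → ℕ := fun m => (k - v) + m * φ with ht
  have hdvdm : ∀ m : ℕ, (c:ℤ) ∣ (p:ℤ)^(t m) - N := by
    intro m
    have h1 : (p:ℤ)^(t m) = (p:ℤ)^(k-v) * ((p:ℤ)^φ)^m := by
      rw [← pow_mul, ← pow_add]
      congr 1
      simp only [ht]
      rw [Nat.mul_comm]
    have h2 : (c:ℤ) ∣ ((p:ℤ)^φ)^m - 1 := by
      have := sub_dvd_pow_sub_pow ((p:ℤ)^φ) 1 m
      rw [one_pow] at this
      exact heuler.trans this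
    have h3 : (p:ℤ)^(t m) - N = (p:ℤ)^(k-v) * (((p:ℤ)^φ)^m - 1) - c * x := by
      rw [h1, hN]; ring
    rw [h3]
    exact (h2.mul_left _).sub (dvd_mul_right _ _)
  set M := N.toNat + 1 with hM
  have hMt : ∀ i : ℕ, M ≤ t (M + i) := fun i => by
    have : M + i ≤ (M + i) * φ := Nat.le_mul_of_pos_right _ hφ
    simp only [ht]; omega
  have htpos : ∀ i : ℕ, N < (p:ℤ)^(t (M + i)) := by
    intro i
    have h1 : N ≤ (N.toNat : ℤ) := Int.self_le_toNat N
    have h2 : ((t (M+i) : ℕ) : ℤ) < (2:ℤ)^(t (M+i)) := by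
      exact_mod_cast Nat.lt_two_pow_self (n := t (M+i))
    have h3 : (2:ℤ)^(t (M+i)) ≤ (p:ℤ)^(t (M+i)) :=
      pow_le_pow_left₀ (by norm_num) (by exact_mod_cast hp.two_le) _
    have h4 : ((M:ℕ):ℤ) ≤ ((t (M+i) : ℕ) : ℤ) := by exact_mod_cast hMt i
    have h5 : ((M:ℕ):ℤ) = (N.toNat : ℤ) + 1 := by rw [hM]; push_cast; ring
    linarith
  set q : ℕ → ℤ := fun i => ((p:ℤ)^(t (M + i)) - N) / c with hq
  have hcq : ∀ i, (c:ℤ) * q i = (p:ℤ)^(t (M + i)) - N := fun i =>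
    Int.mul_ediv_cancel' (hdvdm _)
  have hqpos : ∀ i, 0 < q i := by
    intro i
    have h1 := hcq i
    have h2 := htpos i
    have h3 : (0:ℤ) < c := by exact_mod_cast hc0
    nlinarith [h1, h2, h3]
  set f : ℕ → ℕ := fun i => (q i).toNat with hf
  have hvalue : ∀ i, (c:ℤ) * (f i) + N = (p:ℤ)^(t (M + i)) := by
    intro i
    have : ((f i : ℕ) : ℤ) = q i := Int.toNat_of_nonneg (hqpos i).le
    rw [this]
    linarith [hcq i]
  apply Set.infinite_of_injective_forall_mem (f := f)
  case hi => -- injective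
    have hmono : StrictMono f := by
      intro i j hij
      have h1 : t (M + i) < t (M + j) := by
        simp only [ht]
        have : (M + i) * φ < (M + j) * φ := Nat.mul_lt_mul_of_pos_right (by omega) hφ
        omega
      have h2 : (p:ℤ)^(t (M+i)) < (p:ℤ)^(t (M+j)) := by
        apply pow_lt_pow_right₀ (by exact_mod_cast hp.one_lt) h1
      have h3 : q i < q j := by
        have := hcq i; have := hcq j
        have h3 : (0:ℤ) < c := by exact_mod_cast hc0
        nlinarith
      have hi' := hqpos i
      have hj' := hqpos j
      simp only [hf]
      omega
    exact hmono.injective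
  case hf =>
    intro i
    have hT1 : 1 ≤ t (M + i) := le_trans (by omega) (hMt i)
    have hp0 : (0:ℤ) < p := by exact_mod_cast hp.pos
    refine ⟨?_, ?_, ?_⟩
    · have := hqpos i; simp only [hf]; omega
    · rw [hg, ← hc, hb, hvalue i]
      positivity
    · rw [hg, ← hc, hb, hvalue i]
      rw [show ((p:ℤ))^(t (M+i)) = ((p^(t (M+i)) : ℕ) : ℤ) by push_cast; ring,
        Int.toNat_natCast, rad_prime_pow hp (by omega : t (M+i) ≠ 0)]
      exact dvd_pow_self p (by omega : v ≠ 0)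

theorem rho_prime_power_line (p : ℕ) (hp : p.Prime) (a k : ℕ) (ha : 0 < a) (hk : 0 < k)
    (x : ℤ) :
    ((p ∣ a ∧ ¬ p ^ (k + 1) ∣ a) → (Rset a ((p : ℤ) ^ k + a * x)).Infinite) ∧
    (((a : ℤ) * x ≤ -(p : ℤ) ^ k ∧ (a ∣ p ^ k - 1 ∨ p ^ (k + 1) ∣ a)) →
      ∃! n : ℕ, n ∈ Rset a ((p : ℤ) ^ k + a * x)) ∧
    ((¬ (p ∣ a ∧ ¬ p ^ (k + 1) ∣ a) ∧
      ¬ ((a : ℤ) * x ≤ -(p : ℤ) ^ k ∧ (a ∣ p ^ k - 1 ∨ p ^ (k + 1) ∣ a))) →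
      Rset a ((p : ℤ) ^ k + a * x) = ∅) := by
  have hpk1 : 1 ≤ p ^ k := Nat.one_le_pow _ _ hp.pos
  have hpkcast : (((p ^ k - 1 : ℕ)) : ℤ) = (p:ℤ)^k - 1 := by
    push_cast [hpk1]; ring
  refine ⟨fun ⟨h1, h2⟩ => Rset_infinite hp ha hk h1 h2 x, ?_, ?_⟩
  · rintro ⟨hle, hor⟩
    rcases hor with hd1 | hd2
    · -- a ∣ p^k - 1, so p ∤ a
      have hpa : ¬ p ∣ a := by
        intro hpa
        have h1 : p ∣ p ^ k - 1 := hpa.trans hd1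
        have h2 : p ∣ p ^ k := dvd_pow_self p hk.ne'
        have : p ∣ 1 := by
          have := Nat.dvd_sub h2 h1
          rwa [Nat.sub_sub_self hpk1] at this
        exact hp.one_lt.ne' (Nat.dvd_one.mp this)
      have hdZ : (a:ℤ) ∣ (p:ℤ)^k - 1 := by
        rw [← hpkcast]
        exact_mod_cast hd1
      obtain ⟨d, hd⟩ := hdZ
      set n0 : ℤ := -d - x with hn0
      have heq : (a:ℤ) * n0 + ((p:ℤ)^k + a*x) = 1 := by
        rw [hn0]
        have : (a:ℤ) * d = (p:ℤ)^k - 1 := hd.symm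
        linarith [this]
      have hn0pos : 0 < n0 := by
        have h1 : (a:ℤ) * n0 = 1 - (p:ℤ)^k - a*x := by linarith
        have h2 : 0 < (a:ℤ) * n0 := by rw [h1]; linarith
        have ha' : (0:ℤ) < a := by exact_mod_cast ha
        nlinarith
      refine ⟨n0.toNat, ?_, ?_⟩
      · show n0.toNat ∈ Rset a ((p:ℤ)^k + a*x)
        rw [mem_Rset_coprime k hp hpa]
        constructor
        · omega
        · rw [Int.toNat_of_nonneg hn0pos.le]; exact heq
      · intro m hm
        rw [mem_Rset_coprime k hp hpa] at hm
        obtain ⟨hm1, hm2⟩ := hm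
        have : (a:ℤ) * m = (a:ℤ) * n0 := by linarith
        have ha' : (a:ℤ) ≠ 0 := by exact_mod_cast ha.ne'
        have := mul_left_cancel₀ ha' this
        omega
    · -- p^(k+1) ∣ a
      have hx : x ≤ -1 := by
        by_contra h
        push_neg at h
        have hx0 : 0 ≤ x := by omega
        have ha' : (0:ℤ) ≤ a := by positivity
        have hpk0 : (0:ℤ) < (p:ℤ)^k := by
          have : (0:ℤ) < p := by exact_mod_cast hp.pos
          positivity
        nlinarith
      refine ⟨(-x).toNat, ?_, ?_⟩
      · show (-x).toNat ∈ Rset a ((p:ℤ)^k + a*x)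
        rw [mem_Rset_pow_dvd hp ha hd2]
        constructor
        · omega
        · rw [Int.toNat_of_nonneg (by omega)]
      · intro m hm
        rw [mem_Rset_pow_dvd hp ha hd2] at hm
        omega
  · rintro ⟨hnc1, hnc2⟩
    rw [Set.eq_empty_iff_forall_notMem]
    intro n hn
    by_cases hd2 : p ^ (k+1) ∣ a
    · rw [mem_Rset_pow_dvd hp ha hd2] at hn
      obtain ⟨hn1, hn2⟩ := hn
      apply hnc2
      refine ⟨?_, Or.inr hd2⟩
      have hx : x ≤ -1 := by omega
      have hapk : (p:ℤ)^k ≤ (a:ℤ) := by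
        have h1 : p ^ k ≤ a := Nat.le_of_dvd ha ((pow_dvd_pow p (Nat.le_succ k)).trans hd2)
        have : ((p^k : ℕ) : ℤ) ≤ (a:ℤ) := by exact_mod_cast h1
        rwa [show ((p^k : ℕ):ℤ) = (p:ℤ)^k by push_cast; ring] at this
      have ha' : (0:ℤ) < a := by exact_mod_cast ha
      nlinarith
    · have hpa : ¬ p ∣ a := fun h => hnc1 ⟨h, hd2⟩
      rw [mem_Rset_coprime k hp hpa] at hn
      obtain ⟨hn1, hn2⟩ := hn
      apply hnc2
      have ha' : (0:ℤ) < a := by exact_mod_cast ha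
      constructor
      · have h1 : (a:ℤ) * n ≥ a := by nlinarith [show (1:ℤ) ≤ (n:ℤ) by exact_mod_cast hn1]
        linarith
      · left
        have hdZ : (a:ℤ) ∣ (p:ℤ)^k - 1 := ⟨-(n:ℤ) - x, by linarith⟩
        rw [← hpkcast] at hdZ
        exact_mod_cast hdZ
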